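/- Let G be an edge-coloured graph on n ≥ 3 vertices such that every vertex is incident to edges of at least n/2 distinct colours. If G is not a properly coloured complete bipartite graph K_{n/2,n/2}, not K_4, and not K_4 minus an edge, then G contains a rainbow triangle, i.e., three mutually adjacent vertices whose three connecting edges all have distinct colours. -/

import Mathlib

open Finset


lemma rt_L1 {V : Type*} [DecidableEq V] (s : Finset V) (f : V → ℕ) :
    ((s ×ˢ s).filter fun p => p.1 ≠ p.2 ∧ f p.1 = f p.2).card ≤
      (s.card - (s.image f).card) * ((s.card - (s.image f).card) + 1) := by
  classical
  set P := (s ×ˢ s).filter (fun p => p.1 ≠ p.2 ∧ f p.1 = f p.2) with hPdef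
  have hmaps : ∀ p ∈ P, f p.1 ∈ s.image f := by
    intro p hp
    rw [hPdef, mem_filter, mem_product] at hp
    exact mem_image_of_mem f hp.1.1
  have hcard := Finset.card_eq_sum_card_fiberwise hmaps
  have hfib : ∀ b ∈ s.image f, P.filter (fun p => f p.1 = b) =
      (s.filter fun a => f a = b).offDiag := by
    intro b _
    ext ⟨a, a'⟩
    simp only [hPdef, Finset.mem_filter, Finset.mem_product, Finset.mem_offDiag]
    constructor
    · rintro ⟨⟨⟨ha, ha'⟩, hne, hff⟩, hb⟩
      exact ⟨⟨ha, hb⟩, ⟨ha', hff ▸ hb⟩, hne⟩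
    · rintro ⟨⟨ha, hb⟩, ⟨ha', hb'⟩, hne⟩
      exact ⟨⟨⟨ha, ha'⟩, hne, by rw [hb, hb']⟩, hb⟩
  set m : ℕ → ℕ := fun b => (s.filter fun a => f a = b).card with hmdef
  have hsum_m : ∑ b ∈ s.image f, m b = s.card :=
    (Finset.card_eq_sum_card_fiberwise (fun a ha => mem_image_of_mem f ha)).symm
  have hm1 : ∀ b ∈ s.image f, 1 ≤ m b := by
    intro b hb
    obtain ⟨a, ha, rfl⟩ := Finset.mem_image.mp hb
    exact Finset.card_pos.mpr ⟨a, Finset.mem_filter.mpr ⟨ha, rfl⟩⟩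
  have hsplit : ∑ b ∈ s.image f, m b = (∑ b ∈ s.image f, (m b - 1)) + (s.image f).card := by
    rw [Finset.card_eq_sum_ones (s.image f), ← Finset.sum_add_distrib]
    exact Finset.sum_congr rfl fun b hb => by have := hm1 b hb; omega
  set A := s.card - (s.image f).card with hAdef
  have hsumA : ∑ b ∈ s.image f, (m b - 1) = A := by omega
  have hble : ∀ b ∈ s.image f, m b - 1 ≤ A := by
    intro b hb
    calc m b - 1 ≤ ∑ b' ∈ s.image f, (m b' - 1) :=
          Finset.single_le_sum (f := fun b' => m b' - 1) (fun _ _ => Nat.zero_le _) hb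
      _ = A := hsumA
  calc P.card = ∑ b ∈ s.image f, ((s.filter fun a => f a = b).offDiag).card := by
        rw [hcard]; exact Finset.sum_congr rfl fun b hb => by rw [← hfib b hb]
    _ = ∑ b ∈ s.image f, (m b * m b - m b) := by
        exact Finset.sum_congr rfl fun b _ => Finset.offDiag_card _
    _ ≤ ∑ b ∈ s.image f, (A + 1) * (m b - 1) := by
        apply Finset.sum_le_sum
        intro b hb
        obtain ⟨k, hk⟩ := Nat.exists_eq_add_of_le (hm1 b hb)
        have hkA : k ≤ A := by have := hble b hb; omega
        have h1 : m b * m b - m b = (k + 1) * k := by rw [hk]; ring_nf; omega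
        have h2 : m b - 1 = k := by omega
        rw [h1, h2]
        exact Nat.mul_le_mul_right k (by omega)
    _ = (A + 1) * A := by rw [← Finset.mul_sum, hsumA]
    _ = A * (A + 1) := Nat.mul_comm _ _

def rtT6 {V : Type*} [Fintype V] [DecidableEq V] (N : V → Finset V) : Finset ((V × V) × V) :=
  (((univ : Finset V) ×ˢ univ) ×ˢ univ).filter
    (fun t => t.1.2 ∈ N t.1.1 ∧ t.2 ∈ N t.1.1 ∧ t.2 ∈ N t.1.2)

lemma rt_apex {V : Type*} [Fintype V] [DecidableEq V] (N : V → Finset V) (c : V → V → ℕ)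
    (hsymN : ∀ u v, u ∈ N v ↔ v ∈ N u) (hirr : ∀ v, v ∉ N v)
    (hrain : ∀ x y z, y ∈ N x → z ∈ N x → z ∈ N y →
      (c x y = c x z ∨ c y x = c y z ∨ c z x = c z y)) :
    (rtT6 N).card ≤ 3 * ∑ v, ((N v).card - ((N v).image (c v)).card) *
      (((N v).card - ((N v).image (c v)).card) + 1) := by
  classical
  set A2 := ((univ : Finset V) ×ˢ (univ ×ˢ univ)).filter
    (fun t => t.2.1 ∈ N t.1 ∧ t.2.2 ∈ N t.1 ∧ t.2.1 ≠ t.2.2 ∧ c t.1 t.2.1 = c t.1 t.2.2)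
    with hA2def
  set φ : (V × V) × V → V × (V × V) := fun t =>
    if c t.1.1 t.1.2 = c t.1.1 t.2 then (t.1.1, (t.1.2, t.2))
    else if c t.1.2 t.1.1 = c t.1.2 t.2 then (t.1.2, (t.1.1, t.2))
    else (t.2, (t.1.1, t.1.2)) with hphidef
  have hmem : ∀ t ∈ rtT6 N, t.1.2 ∈ N t.1.1 ∧ t.2 ∈ N t.1.1 ∧ t.2 ∈ N t.1.2 := by
    intro t ht
    rw [rtT6, mem_filter] at ht
    exact ht.2
  have hne : ∀ {x y : V}, y ∈ N x → x ≠ y := by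
    intro x y hy h
    exact hirr x (by rw [h] at hy ⊢; exact hy)
  have hmapsto : ∀ t ∈ rtT6 N, φ t ∈ A2 := by
    rintro ⟨⟨x, y⟩, z⟩ ht
    obtain ⟨hxy, hxz, hyz⟩ := hmem _ ht
    rw [hA2def, mem_filter]
    refine ⟨mem_product.mpr ⟨mem_univ _, mem_product.mpr ⟨mem_univ _, mem_univ _⟩⟩, ?_⟩
    rw [hphidef]
    by_cases h1 : c x y = c x z
    · simp only [if_pos h1]
      exact ⟨hxy, hxz, hne hyz, h1⟩
    · by_cases h2 : c y x = c y z
      · simp only [if_neg h1, if_pos h2]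
        exact ⟨(hsymN x y).mpr hxy, hyz, hne hxz, h2⟩
      · simp only [if_neg h1, if_neg h2]
        rcases hrain x y z hxy hxz hyz with h | h | h
        · exact absurd h h1
        · exact absurd h h2
        · exact ⟨(hsymN x z).mpr hxz, (hsymN y z).mpr hyz, hne hxy, h⟩
  have hcard := Finset.card_eq_sum_card_fiberwise (f := φ) (t := (rtT6 N).image φ)
    (fun t ht => mem_image_of_mem φ ht)
  have hfib3 : ∀ b ∈ (rtT6 N).image φ,
      ((rtT6 N).filter (fun t => φ t = b)).card ≤ 3 := by
    intro b _
    have hsub : (rtT6 N).filter (fun t => φ t = b) ⊆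
        {((b.1, b.2.1), b.2.2), ((b.2.1, b.1), b.2.2), ((b.2.1, b.2.2), b.1)} := by
      rintro ⟨⟨x, y⟩, z⟩ ht
      rw [mem_filter] at ht
      have hphi := ht.2
      rw [hphidef] at hphi
      dsimp only at hphi
      simp only [mem_insert, mem_singleton]
      by_cases h1 : c x y = c x z
      · rw [if_pos h1] at hphi
        left
        rw [← hphi]
      · by_cases h2 : c y x = c y z
        · rw [if_neg h1, if_pos h2] at hphi
          right; left
          rw [← hphi]
        · rw [if_neg h1, if_neg h2] at hphi
          right; right
          rw [← hphi]
    calc ((rtT6 N).filter (fun t => φ t = b)).card ≤ _ := Finset.card_le_card hsub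
      _ ≤ 3 := by
        apply le_trans (Finset.card_insert_le _ _)
        apply Nat.succ_le_succ
        apply le_trans (Finset.card_insert_le _ _)
        exact Nat.succ_le_succ (le_of_eq (Finset.card_singleton _))
  have hT6le : (rtT6 N).card ≤ 3 * A2.card := by
    calc (rtT6 N).card = ∑ b ∈ (rtT6 N).image φ, ((rtT6 N).filter (fun t => φ t = b)).card :=
          hcard
      _ ≤ ∑ _b ∈ (rtT6 N).image φ, 3 := Finset.sum_le_sum hfib3
      _ = 3 * ((rtT6 N).image φ).card := by rw [Finset.sum_const, smul_eq_mul, Nat.mul_comm]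
      _ ≤ 3 * A2.card := by
          apply Nat.mul_le_mul_left
          apply Finset.card_le_card
          intro b hb
          obtain ⟨t, ht, rfl⟩ := Finset.mem_image.mp hb
          exact hmapsto t ht
  -- now bound A2.card
  have hA2card : A2.card = ∑ z, ((N z ×ˢ N z).filter
      (fun p => p.1 ≠ p.2 ∧ c z p.1 = c z p.2)).card := by
    rw [Finset.card_eq_sum_card_fiberwise (f := Prod.fst) (t := univ) (fun t _ => mem_univ _)]
    apply Finset.sum_congr rfl
    intro z _
    have : A2.filter (fun t => t.1 = z) =
        {z} ×ˢ ((N z ×ˢ N z).filter (fun p => p.1 ≠ p.2 ∧ c z p.1 = c z p.2)) := by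
      ext ⟨a, p, q⟩
      simp only [hA2def, mem_filter, mem_product, mem_univ, true_and, mem_singleton]
      constructor
      · rintro ⟨⟨h1, h2, h3, h4⟩, rfl⟩
        exact ⟨rfl, ⟨h1, h2⟩, h3, h4⟩
      · rintro ⟨rfl, ⟨h1, h2⟩, h3, h4⟩
        exact ⟨⟨h1, h2, h3, h4⟩, rfl⟩
    rw [this, Finset.card_product, Finset.card_singleton, one_mul]
  calc (rtT6 N).card ≤ 3 * A2.card := hT6le
    _ ≤ 3 * ∑ v, ((N v).card - ((N v).image (c v)).card) *
        (((N v).card - ((N v).image (c v)).card) + 1) := by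
      apply Nat.mul_le_mul_left
      rw [hA2card]
      exact Finset.sum_le_sum fun z _ => rt_L1 (N z) (c z)



lemma rt_master {V : Type*} [Fintype V] [DecidableEq V] (N : V → Finset V)
    (hsymN : ∀ u v, u ∈ N v ↔ v ∈ N u) :
    2 * ∑ v, (N v).card * (N v).card ≤
      (Fintype.card V) * ∑ v, (N v).card + (rtT6 N).card := by
  rw [rtT6]
  classical
  set E2 := ((univ : Finset V) ×ˢ univ).filter (fun p => p.2 ∈ N p.1) with hE2def
  set T6 := (((univ : Finset V) ×ˢ univ) ×ˢ univ).filter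
      (fun t => t.1.2 ∈ N t.1.1 ∧ t.2 ∈ N t.1.1 ∧ t.2 ∈ N t.1.2) with hT6def
  -- fibers of E2 over first coordinate
  have hfib1 : ∀ u : V, E2.filter (fun p => p.1 = u) = {u} ×ˢ N u := by
    intro u
    ext ⟨a, b⟩
    simp only [hE2def, mem_filter, mem_product, mem_univ, true_and, mem_singleton]
    constructor
    · rintro ⟨hb, rfl⟩; exact ⟨rfl, hb⟩
    · rintro ⟨rfl, hb⟩; exact ⟨hb, rfl⟩
  have hfib2 : ∀ v : V, E2.filter (fun p => p.2 = v) = N v ×ˢ {v} := by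
    intro v
    ext ⟨a, b⟩
    simp only [hE2def, mem_filter, mem_product, mem_univ, true_and, mem_singleton]
    constructor
    · rintro ⟨hb, h⟩; subst h; exact ⟨(hsymN a _).mpr hb, rfl⟩
    · rintro ⟨ha, h⟩; subst h; exact ⟨(hsymN a _).mp ha, rfl⟩
  have hE2card : E2.card = ∑ u, (N u).card := by
    rw [Finset.card_eq_sum_card_fiberwise (f := Prod.fst) (t := univ) (fun p _ => mem_univ _)]
    exact Finset.sum_congr rfl fun u _ => by
      rw [hfib1 u, Finset.card_product, Finset.card_singleton, one_mul]
  have hsumfst : ∑ p ∈ E2, (N p.1).card = ∑ u, (N u).card * (N u).card := by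
    rw [← Finset.sum_fiberwise_of_maps_to (g := Prod.fst) (t := (univ : Finset V))
        (fun p (_ : p ∈ E2) => mem_univ p.1) (fun p => (N p.1).card)]
    refine Finset.sum_congr rfl fun u _ => ?_
    rw [hfib1 u]
    have h2 : ∀ p ∈ ({u} ×ˢ N u), (N p.1).card = (N u).card := by
      intro p hp; rw [mem_product, mem_singleton] at hp; rw [hp.1]
    rw [Finset.sum_congr rfl h2, Finset.sum_const, card_product, card_singleton, one_mul,
      smul_eq_mul, Nat.mul_comm]
  have hsumsnd : ∑ p ∈ E2, (N p.2).card = ∑ u, (N u).card * (N u).card := by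
    rw [← Finset.sum_fiberwise_of_maps_to (g := Prod.snd) (t := (univ : Finset V))
        (fun p (_ : p ∈ E2) => mem_univ p.2) (fun p => (N p.2).card)]
    refine Finset.sum_congr rfl fun v _ => ?_
    rw [hfib2 v]
    have h2 : ∀ p ∈ (N v ×ˢ {v}), (N p.2).card = (N v).card := by
      intro p hp; rw [mem_product, mem_singleton] at hp; rw [hp.2]
    rw [Finset.sum_congr rfl h2, Finset.sum_const, card_product, card_singleton, mul_one,
      smul_eq_mul, Nat.mul_comm]
  have hT6card : T6.card = ∑ p ∈ E2, (N p.1 ∩ N p.2).card := by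
    rw [Finset.card_eq_sum_card_fiberwise (f := Prod.fst) (t := E2) (by
      rintro ⟨⟨a, b⟩, w⟩ ht
      rw [Finset.mem_coe] at ht
      simp only [hT6def, mem_filter] at ht
      rw [Finset.mem_coe, hE2def, mem_filter, mem_product]
      exact ⟨⟨mem_univ _, mem_univ _⟩, ht.2.1⟩)]
    apply Finset.sum_congr rfl
    rintro ⟨u, v⟩ hp
    rw [hE2def, mem_filter] at hp
    have : T6.filter (fun t => t.1 = (u, v)) = {(u, v)} ×ˢ (N u ∩ N v) := by
      ext ⟨⟨a, b⟩, w⟩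
      simp only [hT6def, mem_filter, mem_product, mem_univ, true_and, mem_singleton,
        Finset.mem_inter, Prod.mk.injEq]
      constructor
      · rintro ⟨⟨hab, haw, hbw⟩, rfl, rfl⟩
        exact ⟨⟨rfl, rfl⟩, haw, hbw⟩
      · rintro ⟨⟨rfl, rfl⟩, hw1, hw2⟩
        exact ⟨⟨hp.2, hw1, hw2⟩, rfl, rfl⟩
    rw [this, Finset.card_product, Finset.card_singleton, one_mul]
  -- key per-edge inequality
  have hedge : ∀ p ∈ E2, (N p.1).card + (N p.2).card ≤
      Fintype.card V + (N p.1 ∩ N p.2).card := by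
    intro p _
    have h1 : (N p.1 ∪ N p.2).card + (N p.1 ∩ N p.2).card = (N p.1).card + (N p.2).card :=
      Finset.card_union_add_card_inter _ _
    have h2 : (N p.1 ∪ N p.2).card ≤ Fintype.card V := by
      simpa using Finset.card_le_card (Finset.subset_univ (N p.1 ∪ N p.2))
    omega
  calc 2 * ∑ v, (N v).card * (N v).card
      = ∑ p ∈ E2, ((N p.1).card + (N p.2).card) := by
        rw [Finset.sum_add_distrib, hsumfst, hsumsnd]; ring
    _ ≤ ∑ p ∈ E2, (Fintype.card V + (N p.1 ∩ N p.2).card) := Finset.sum_le_sum hedge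
    _ = Fintype.card V * ∑ v, (N v).card + T6.card := by
        rw [Finset.sum_add_distrib, Finset.sum_const, hT6card, hE2card, smul_eq_mul]
        ring


-- odd case per-vertex
lemma rt_arith_odd (n k w d : ℕ) (hodd : Odd n) (hnk : n ≤ 2 * k) (hkd : k + w = d)
    (hdn : d + 1 ≤ n) : n * d + 3 * (w * (w + 1)) + 1 ≤ 2 * (d * d) := by
  obtain ⟨m, rfl⟩ := hodd
  have h1 : m + 1 ≤ k := by omega
  zify
  nlinarith [sq_nonneg ((d : ℤ) - w - m - 1), mul_nonneg (by omega : (0:ℤ) ≤ 2*m - d)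
      (by omega : (0:ℤ) ≤ (d:ℤ) - w - m - 1), mul_nonneg (by omega : (0:ℤ) ≤ (w:ℤ))
      (by omega : (0:ℤ) ≤ 2*m - d), sq_nonneg ((w:ℤ))]
-- even case per-vertex
lemma rt_arith_even (n k w d h : ℕ) (hh : 3 ≤ h) (hn : n = 2 * h) (hnk : n ≤ 2 * k)
    (hkd : k + w = d) (hdn : d + 1 ≤ n) :
    n * d + 3 * (w * (w + 1)) + w ≤ 2 * (d * d) := by
  subst hn
  have h1 : h ≤ k := by omega
  zify
  nlinarith [mul_nonneg (by omega : (0:ℤ) ≤ (d:ℤ) - h) (by omega : (0:ℤ) ≤ (d:ℤ) - h - w),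
    mul_nonneg (by omega : (0:ℤ) ≤ (w:ℤ)) (by omega : (0:ℤ) ≤ 2*(h:ℤ) - w - 4),
    mul_nonneg (by omega : (0:ℤ) ≤ (w:ℤ)) (by omega : (0:ℤ) ≤ (d:ℤ) - h - w)]

def rtN {V : Type*} [Fintype V] (G : SimpleGraph V) [DecidableRel G.Adj] : V → Finset V :=
  fun v => Finset.univ.filter (fun u => G.Adj v u)

lemma rt_arith_4 (k w d : ℕ) (hnk : 4 ≤ 2 * k) (hkd : k + w = d) (hdn : d + 1 ≤ 4) :
    4 * d + 4 * w ≤ 2 * (d * d) := by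
  have hd3 : d ≤ 3 := by omega
  interval_cases d <;> omega


set_option maxHeartbeats 2000000

/-- Li–Ning–Xu–Zhang: an edge-coloured graph on `n ≥ 3` vertices with minimum colour
degree at least `n/2` which is not a properly coloured `K_{n/2,n/2}`, not `K_4` and not
`K_4` minus an edge contains a rainbow triangle. -/
theorem stmt_0 (n : ℕ) (hn : 3 ≤ n) (G : SimpleGraph (Fin n))
    (c : Fin n → Fin n → ℕ) (hsym : ∀ u v, c u v = c v u)
    (hdeg : ∀ v : Fin n, (n : ℝ) / 2 ≤ (Set.ncard ((c v) '' {w | G.Adj v w}) : ℝ))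
    (hbip : ¬ ∃ A : Finset (Fin n), 2 * A.card = n ∧
      (∀ u v : Fin n, G.Adj u v ↔ ((u ∈ A) ↔ (v ∉ A))) ∧
      (∀ u v w : Fin n, G.Adj u v → G.Adj u w → v ≠ w → c u v ≠ c u w))
    (hK4 : ¬ (n = 4 ∧ ∀ u v : Fin n, u ≠ v → G.Adj u v))
    (hK4e : ¬ (n = 4 ∧ ∃ a b : Fin n, a ≠ b ∧
      ∀ u v : Fin n, G.Adj u v ↔ (u ≠ v ∧ ¬(u = a ∧ v = b) ∧ ¬(u = b ∧ v = a)))) :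
    ∃ x y z : Fin n, G.Adj x y ∧ G.Adj x z ∧ G.Adj y z ∧
      c x y ≠ c x z ∧ c x y ≠ c y z ∧ c x z ≠ c y z := by
  classical
  by_contra hrain0
  push_neg at hrain0
  -- neighborhoods
  letI : DecidableRel G.Adj := Classical.decRel _
  set N : Fin n → Finset (Fin n) := rtN G with hNdef
  have hNmem : ∀ v u, u ∈ N v ↔ G.Adj v u := by
    intro v u; rw [hNdef]; simp [rtN]
  have hsymN : ∀ u v, u ∈ N v ↔ v ∈ N u := by
    intro u v; rw [hNmem, hNmem]; exact G.adj_comm v u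
  have hirrN : ∀ v, v ∉ N v := by
    intro v h; exact G.irrefl ((hNmem v v).mp h)
  have hrain : ∀ x y z, y ∈ N x → z ∈ N x → z ∈ N y →
      (c x y = c x z ∨ c y x = c y z ∨ c z x = c z y) := by
    intro x y z hy hz hyz
    rw [hNmem] at hy hz hyz
    by_cases h1 : c x y = c x z
    · exact Or.inl h1
    by_cases h2 : c x y = c y z
    · refine Or.inr (Or.inl ?_)
      rw [hsym y x]; exact h2
    · refine Or.inr (Or.inr ?_)
      rw [hsym z x, hsym z y]
      exact hrain0 x y z hy hz hyz h1 h2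
  -- basic counting facts
  have hkd : ∀ v, ((N v).image (c v)).card ≤ (N v).card := fun v => Finset.card_image_le
  have hnk : ∀ v, n ≤ 2 * ((N v).image (c v)).card := by
    intro v
    have h1 : c v '' {w | G.Adj v w} = ↑((N v).image (c v)) := by
      ext y
      simp only [Set.mem_image, Set.mem_setOf_eq, Finset.coe_image, Finset.mem_coe]
      constructor
      · rintro ⟨w, hw, rfl⟩; exact ⟨w, (hNmem v w).mpr hw, rfl⟩
      · rintro ⟨w, hw, rfl⟩; exact ⟨w, (hNmem v w).mp hw, rfl⟩
    have h2 := hdeg v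
    rw [h1, Set.ncard_coe_finset] at h2
    have : (n : ℝ) ≤ 2 * ((N v).image (c v)).card := by linarith
    exact_mod_cast this
  have hdn : ∀ v, (N v).card + 1 ≤ n := by
    intro v
    have h1 : N v ⊆ univ.erase v := by
      intro u hu
      rw [Finset.mem_erase]
      exact ⟨fun h => hirrN v (h ▸ hu), mem_univ u⟩
    have h2 := Finset.card_le_card h1
    rw [Finset.card_erase_of_mem (mem_univ v), Finset.card_univ, Fintype.card_fin] at h2
    omega
  -- master inequality combined with apex bound
  have hM := rt_master N hsymN
  have hB := rt_apex N c hsymN hirrN hrain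
  rw [Fintype.card_fin] at hM
  have hMB : 2 * (∑ v, (N v).card * (N v).card) ≤ n * (∑ v, (N v).card) +
      3 * (∑ v, ((N v).card - ((N v).image (c v)).card) *
        (((N v).card - ((N v).image (c v)).card) + 1)) := by omega
  -- triangle-free consequence machinery
  have htriT6 : ∀ x y z, G.Adj x y → G.Adj x z → G.Adj y z → ((x,y),z) ∈ rtT6 N := by
    intro x y z h1 h2 h3
    rw [rtT6, mem_filter]
    refine ⟨by simp, ?_⟩
    exact ⟨(hNmem x y).mpr h1, (hNmem x z).mpr h2, (hNmem y z).mpr h3⟩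
  -- ENDGAME (shared): triangle-free + proper + balanced degrees gives hbip contradiction
  have endgame : (∀ x y z, G.Adj x y → G.Adj x z → G.Adj y z → False) →
      (∀ v, ((N v).image (c v)).card = (N v).card) → False := by
    intro htf hkeq
    have hk2 : ∀ v, 2 ≤ (N v).card := by
      intro v; have := hnk v; have := hkd v; omega
    have hv0 : (0 : ℕ) < n := by omega
    set v0 : Fin n := ⟨0, hv0⟩
    obtain ⟨u0, hu0⟩ := Finset.card_pos.mp (lt_of_lt_of_le (by norm_num) (hk2 v0))
    have hadj0 : G.Adj v0 u0 := (hNmem v0 u0).mp hu0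
    set A := N v0 with hAdef
    set B := N u0 with hBdef
    have hABempty : A ∩ B = ∅ := by
      rw [Finset.eq_empty_iff_forall_notMem]
      intro z hz
      rw [Finset.mem_inter] at hz
      exact htf v0 u0 z hadj0 ((hNmem v0 z).mp hz.1) ((hNmem u0 z).mp hz.2)
    have hABcard : A.card + B.card ≤ n := by
      have h1 := Finset.card_union_add_card_inter A B
      rw [hABempty, Finset.card_empty] at h1
      have h2 : (A ∪ B).card ≤ n := by
        have := Finset.card_le_card (Finset.subset_univ (A ∪ B))
        rwa [Finset.card_univ, Fintype.card_fin] at this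
      omega
    have hA2 : n ≤ 2 * A.card := by
      rw [hAdef]; have := hnk v0; have := hkd v0; have := hkeq v0; omega
    have hB2 : n ≤ 2 * B.card := by
      rw [hBdef]; have := hnk u0; have := hkd u0; have := hkeq u0; omega
    have hcards : A.card + B.card = n ∧ 2 * A.card = n ∧ 2 * B.card = n := by omega
    have hunion : A ∪ B = univ := by
      apply Finset.eq_univ_of_card
      have h1 := Finset.card_union_add_card_inter A B
      rw [hABempty, Finset.card_empty] at h1
      rw [Fintype.card_fin]
      omega
    have hmemAB : ∀ y, y ∉ A ↔ y ∈ B := by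
      intro y
      constructor
      · intro hy
        have : y ∈ A ∪ B := hunion ▸ mem_univ y
        rw [Finset.mem_union] at this
        tauto
      · intro hy hyA
        have : y ∈ A ∩ B := Finset.mem_inter.mpr ⟨hyA, hy⟩
        rw [hABempty] at this
        exact absurd this (Finset.notMem_empty y)
    have hNA : ∀ x ∈ A, N x = B := by
      intro x hx
      have hsub : N x ⊆ B := by
        intro y hy
        rw [← hmemAB]
        intro hyA
        exact htf v0 x y ((hNmem v0 x).mp hx) ((hNmem v0 y).mp hyA) ((hNmem x y).mp hy)
      have hle : B.card ≤ (N x).card := by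
        have := hnk x; have := hkd x
        have h3 := Finset.card_le_card hsub
        omega
      exact Finset.eq_of_subset_of_card_le hsub hle
    have hNB : ∀ y ∈ B, N y = A := by
      intro y hy
      have hsub : N y ⊆ A := by
        intro z hz
        by_contra hzA
        rw [hmemAB] at hzA
        exact htf u0 y z ((hNmem u0 y).mp hy) ((hNmem u0 z).mp hzA) ((hNmem y z).mp hz)
      have hle : A.card ≤ (N y).card := by
        have := hnk y; have := hkd y
        have h3 := Finset.card_le_card hsub
        omega
      exact Finset.eq_of_subset_of_card_le hsub hle
    apply hbip
    refine ⟨A, hcards.2.1, ?_, ?_⟩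
    · intro u v
      by_cases hu : u ∈ A
      · have h1 : G.Adj u v ↔ v ∈ B := by rw [← hNA u hu, hNmem]
        rw [h1, ← hmemAB]
        tauto
      · have hu' : u ∈ B := (hmemAB u).mp hu
        have h1 : G.Adj u v ↔ v ∈ A := by rw [← hNB u hu', hNmem]
        rw [h1]
        tauto
    · intro u v w h1 h2 hne heq
      have hinj : Set.InjOn (c u) ↑(N u) := Finset.card_image_iff.mp (hkeq u)
      exact hne (hinj (by rw [Finset.mem_coe, hNmem]; exact h1)
        (by rw [Finset.mem_coe, hNmem]; exact h2) heq)
  -- now the case analysis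
  rcases Nat.even_or_odd n with heven | hodd
  · -- n even
    by_cases h4 : n = 4
    · -- n = 4
      by_cases htri : ∃ x y z, G.Adj x y ∧ G.Adj x z ∧ G.Adj y z
      · -- there is a triangle: graph must be K4 or K4 - e
        obtain ⟨x, y, z, hxy, hxz, hyz⟩ := htri
        subst h4
        have hnexy : x ≠ y := G.ne_of_adj hxy
        have hnexz : x ≠ z := G.ne_of_adj hxz
        have hneyz : y ≠ z := G.ne_of_adj hyz
        have hcard3 : ({x, y, z} : Finset (Fin 4)).card = 3 :=
          Finset.card_eq_three.mpr ⟨x, y, z, hnexy, hnexz, hneyz, rfl⟩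
        have hcompl : (({x, y, z} : Finset (Fin 4))ᶜ).card = 1 := by
          rw [Finset.card_compl, hcard3]
          simp
        obtain ⟨t, htc⟩ := Finset.card_eq_one.mp hcompl
        have htmem : t ∉ ({x, y, z} : Finset (Fin 4)) := by
          have h1 : t ∈ (({x, y, z} : Finset (Fin 4))ᶜ) := htc ▸ Finset.mem_singleton_self t
          rwa [Finset.mem_compl] at h1
        have htx : t ≠ x := fun h => htmem (by simp [h])
        have hty : t ≠ y := fun h => htmem (by simp [h])
        have htz : t ≠ z := fun h => htmem (by simp [h])
        have huniv : ∀ u : Fin 4, u = x ∨ u = y ∨ u = z ∨ u = t := by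
          intro u
          by_cases h : u ∈ ({x, y, z} : Finset (Fin 4))
          · simp only [Finset.mem_insert, Finset.mem_singleton] at h
            tauto
          · right; right; right
            have : u ∈ (({x, y, z} : Finset (Fin 4))ᶜ) := Finset.mem_compl.mpr h
            rw [htc, Finset.mem_singleton] at this
            exact this
        have hk2t : 2 ≤ (N t).card := by
          have := hnk t; have := hkd t; omega
        have hlowdeg : ∀ v0 : Fin 4, N t ⊆ {v0} → False := by
          intro v0 hsubs
          have := Finset.card_le_card hsubs
          rw [Finset.card_singleton] at this
          omega
        have hk4e' : ∀ p q : Fin 4, p ≠ q → ¬ G.Adj p q →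
            (∀ u v : Fin 4, u ≠ v → ¬(u = p ∧ v = q) → ¬(u = q ∧ v = p) → G.Adj u v) →
            False := by
          intro p q hpq hnadj hall
          apply hK4e
          refine ⟨rfl, p, q, hpq, ?_⟩
          intro u v
          constructor
          · intro h
            refine ⟨G.ne_of_adj h, ?_, ?_⟩
            · rintro ⟨rfl, rfl⟩; exact hnadj h
            · rintro ⟨rfl, rfl⟩; exact hnadj h.symm
          · rintro ⟨h1, h2, h3⟩
            exact hall u v h1 h2 h3
        have hyx : G.Adj y x := hxy.symm
        have hzx : G.Adj z x := hxz.symm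
        have hzy : G.Adj z y := hyz.symm
        by_cases hax : G.Adj t x <;> by_cases hay : G.Adj t y <;> by_cases haz : G.Adj t z
        · -- all adjacent: K4
          apply hK4
          refine ⟨rfl, ?_⟩
          intro u v huv
          have hxt : G.Adj x t := hax.symm
          have hyt : G.Adj y t := hay.symm
          have hzt : G.Adj z t := haz.symm
          rcases huniv u with rfl | rfl | rfl | rfl <;> rcases huniv v with rfl | rfl | rfl | rfl <;>
            first | exact absurd rfl huv | assumption
        · -- missing t-z
          apply hk4e' t z htz haz
          intro u v h1 h2 h3
          have hxt : G.Adj x t := hax.symm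
          have hyt : G.Adj y t := hay.symm
          rcases huniv u with rfl | rfl | rfl | rfl <;> rcases huniv v with rfl | rfl | rfl | rfl <;>
            first | exact absurd rfl h1 | exact (h2 ⟨rfl, rfl⟩).elim | exact (h3 ⟨rfl, rfl⟩).elim |
              assumption
        · -- missing t-y
          apply hk4e' t y hty hay
          intro u v h1 h2 h3
          have hxt : G.Adj x t := hax.symm
          have hzt : G.Adj z t := haz.symm
          rcases huniv u with rfl | rfl | rfl | rfl <;> rcases huniv v with rfl | rfl | rfl | rfl <;>
            first | exact absurd rfl h1 | exact (h2 ⟨rfl, rfl⟩).elim | exact (h3 ⟨rfl, rfl⟩).elim |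
              assumption
        · -- only t-x : degree too small
          apply hlowdeg x
          intro u hu
          have hadj := (hNmem t u).mp hu
          have hut : u ≠ t := fun h => G.irrefl (h ▸ hadj)
          rcases huniv u with rfl | rfl | rfl | rfl
          · exact Finset.mem_singleton_self _
          · exact absurd hadj hay
          · exact absurd hadj haz
          · exact absurd rfl hut
        · -- missing t-x
          apply hk4e' t x htx hax
          intro u v h1 h2 h3
          have hyt : G.Adj y t := hay.symm
          have hzt : G.Adj z t := haz.symm
          rcases huniv u with rfl | rfl | rfl | rfl <;> rcases huniv v with rfl | rfl | rfl | rfl <;>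
            first | exact absurd rfl h1 | exact (h2 ⟨rfl, rfl⟩).elim | exact (h3 ⟨rfl, rfl⟩).elim |
              assumption
        · -- only t-y
          apply hlowdeg y
          intro u hu
          have hadj := (hNmem t u).mp hu
          have hut : u ≠ t := fun h => G.irrefl (h ▸ hadj)
          rcases huniv u with rfl | rfl | rfl | rfl
          · exact absurd hadj hax
          · exact Finset.mem_singleton_self _
          · exact absurd hadj haz
          · exact absurd rfl hut
        · -- only t-z
          apply hlowdeg z
          intro u hu
          have hadj := (hNmem t u).mp hu
          have hut : u ≠ t := fun h => G.irrefl (h ▸ hadj)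
          rcases huniv u with rfl | rfl | rfl | rfl
          · exact absurd hadj hax
          · exact absurd hadj hay
          · exact Finset.mem_singleton_self _
          · exact absurd rfl hut
        · -- t isolated-ish
          apply hlowdeg x
          intro u hu
          have hadj := (hNmem t u).mp hu
          have hut : u ≠ t := fun h => G.irrefl (h ▸ hadj)
          rcases huniv u with rfl | rfl | rfl | rfl
          · exact absurd hadj hax
          · exact absurd hadj hay
          · exact absurd hadj haz
          · exact absurd rfl hut
      · -- triangle-free n = 4
        push_neg at htri
        have htf : ∀ x y z, G.Adj x y → G.Adj x z → G.Adj y z → False := by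
          intro x y z a b cc; exact htri x y z a b cc
        have hT60 : (rtT6 N).card = 0 := by
          rw [Finset.card_eq_zero, Finset.eq_empty_iff_forall_notMem]
          rintro ⟨⟨x, y⟩, z⟩ ht
          rw [rtT6, mem_filter] at ht
          exact htf x y z ((hNmem x y).mp ht.2.1) ((hNmem x z).mp ht.2.2.1)
            ((hNmem y z).mp ht.2.2.2)
        have hPV : ∀ v ∈ (univ : Finset (Fin n)),
            n * (N v).card + 4 * ((N v).card - ((N v).image (c v)).card)
              ≤ 2 * ((N v).card * (N v).card) := by
          intro v _
          have h1 := hnk v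
          have h2 := hkd v
          have h3 := hdn v
          revert h1 h2 h3
          generalize ((N v).image (c v)).card = K
          generalize (N v).card = D
          intro h1 h2 h3
          subst h4
          exact rt_arith_4 K (D - K) D h1 (by omega) h3
        have hsumPV := Finset.sum_le_sum hPV
        rw [Finset.sum_add_distrib, ← Finset.mul_sum, ← Finset.mul_sum, ← Finset.mul_sum]
          at hsumPV
        have hwz : ∑ v, ((N v).card - ((N v).image (c v)).card) = 0 := by omega
        rw [Finset.sum_eq_zero_iff] at hwz
        apply endgame htf
        intro v
        have := hwz v (mem_univ v)
        have := hkd v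
        omega
    · -- n even, n ≥ 6
      obtain ⟨hh, hhh⟩ := heven
      have h6 : 3 ≤ hh := by omega
      have hPV : ∀ v ∈ (univ : Finset (Fin n)),
          n * (N v).card + 3 * (((N v).card - ((N v).image (c v)).card) *
            (((N v).card - ((N v).image (c v)).card) + 1))
            + ((N v).card - ((N v).image (c v)).card)
            ≤ 2 * ((N v).card * (N v).card) := by
        intro v _
        exact rt_arith_even n (((N v).image (c v)).card)
          ((N v).card - ((N v).image (c v)).card) ((N v).card) hh h6 (by omega) (hnk v)
          (by have := hkd v; omega) (hdn v)
      have hsumPV := Finset.sum_le_sum hPV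
      rw [Finset.sum_add_distrib, Finset.sum_add_distrib, ← Finset.mul_sum, ← Finset.mul_sum,
        ← Finset.mul_sum] at hsumPV
      have hwz : ∑ v, ((N v).card - ((N v).image (c v)).card) = 0 := by omega
      have hwz' := hwz
      rw [Finset.sum_eq_zero_iff] at hwz'
      have hkeq : ∀ v, ((N v).image (c v)).card = (N v).card := by
        intro v
        have := hwz' v (mem_univ v)
        have := hkd v
        omega
      have hT60 : (rtT6 N).card = 0 := by
        have hz : ∑ v, ((N v).card - ((N v).image (c v)).card) *
            (((N v).card - ((N v).image (c v)).card) + 1) = 0 := by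
          apply Finset.sum_eq_zero
          intro v _
          have := hwz' v (mem_univ v)
          rw [this]
          ring
        omega
      have htf : ∀ x y z, G.Adj x y → G.Adj x z → G.Adj y z → False := by
        intro x y z a b cc
        have hmem := htriT6 x y z a b cc
        rw [Finset.card_eq_zero] at hT60
        rw [hT60] at hmem
        exact Finset.notMem_empty _ hmem
      exact endgame htf hkeq
  · -- n odd
    have hPV : ∀ v ∈ (univ : Finset (Fin n)),
        n * (N v).card + 3 * (((N v).card - ((N v).image (c v)).card) *
          (((N v).card - ((N v).image (c v)).card) + 1)) + 1
          ≤ 2 * ((N v).card * (N v).card) := by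
      intro v _
      exact rt_arith_odd n (((N v).image (c v)).card) ((N v).card - ((N v).image (c v)).card)
        ((N v).card) hodd (hnk v) (by have := hkd v; omega) (hdn v)
    have hsumPV := Finset.sum_le_sum hPV
    rw [Finset.sum_add_distrib, Finset.sum_add_distrib, ← Finset.mul_sum, ← Finset.mul_sum,
      ← Finset.mul_sum, Finset.sum_const, Finset.card_univ, Fintype.card_fin, smul_eq_mul,
      mul_one] at hsumPV
    omega
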